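/- For the planar reduced dual-futile-cycle system with F₁(x₁,x₂) = −k₂x₁/(K_{m1}/S_tot + K_{m1}(1−x₁−x₂)/K_{m2} + x₁) + h₄ c (K_{m3}(1−x₁−x₂)/K_{m4})/(K_{m3}/S_tot + K_{m3}(1−x₁−x₂)/K_{m4} + x₂), the partial derivative ∂F₁/∂x₂ is strictly negative on K₀ = {(x₁,x₂) : x₁ ≥ 0, x₂ ≥ 0, x₁+x₂ ≤ 1}, for all positive parameters k₂, h₄, c, S_tot, K_{m1}, K_{m2}, K_{m3}, K_{m4}. -/

import Mathlib

theorem stmt_11 (k₂ h₄ c S Km1 Km2 Km3 Km4 : ℝ)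
    (hk₂ : 0 < k₂) (hh₄ : 0 < h₄) (hc : 0 < c) (hS : 0 < S)
    (h1 : 0 < Km1) (h2 : 0 < Km2) (h3 : 0 < Km3) (h4 : 0 < Km4)
    (x₁ x₂ : ℝ) (hx₁ : 0 ≤ x₁) (hx₂ : 0 ≤ x₂) (hsum : x₁ + x₂ ≤ 1) :
    deriv (fun t : ℝ =>
      -(k₂ * x₁) / (Km1 / S + Km1 * (1 - x₁ - t) / Km2 + x₁)
      + h₄ * c * (Km3 * (1 - x₁ - t) / Km4)
          / (Km3 / S + Km3 * (1 - x₁ - t) / Km4 + t)) x₂ < 0 := by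
  have hs : 0 ≤ 1 - x₁ - x₂ := by linarith
  have hD1 : 0 < Km1 / S + Km1 * (1 - x₁ - x₂) / Km2 + x₁ := by positivity
  have hD2 : 0 < Km3 / S + Km3 * (1 - x₁ - x₂) / Km4 + x₂ := by positivity
  have h1d : HasDerivAt (fun t : ℝ => 1 - x₁ - t) (-1) x₂ := by
    simpa using (hasDerivAt_id x₂).const_sub (1 - x₁)
  have hg1 : HasDerivAt (fun t : ℝ => Km1 / S + Km1 * (1 - x₁ - t) / Km2 + x₁)
      (Km1 * (-1) / Km2) x₂ :=
    (((h1d.const_mul Km1).div_const Km2).const_add (Km1 / S)).add_const x₁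
  have hf1 : HasDerivAt (fun t : ℝ =>
      -(k₂ * x₁) / (Km1 / S + Km1 * (1 - x₁ - t) / Km2 + x₁))
      ((0 * (Km1 / S + Km1 * (1 - x₁ - x₂) / Km2 + x₁)
        - -(k₂ * x₁) * (Km1 * (-1) / Km2))
        / (Km1 / S + Km1 * (1 - x₁ - x₂) / Km2 + x₁) ^ 2) x₂ :=
    (hasDerivAt_const x₂ (-(k₂ * x₁))).div hg1 hD1.ne'
  have hu : HasDerivAt (fun t : ℝ => Km3 * (1 - x₁ - t) / Km4)
      (Km3 * (-1) / Km4) x₂ := (h1d.const_mul Km3).div_const Km4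
  have hv : HasDerivAt (fun t : ℝ => Km3 / S + Km3 * (1 - x₁ - t) / Km4 + t)
      (Km3 * (-1) / Km4 + 1) x₂ :=
    (((h1d.const_mul Km3).div_const Km4).const_add (Km3 / S)).add (hasDerivAt_id x₂)
  have hq : HasDerivAt (fun t : ℝ =>
      Km3 * (1 - x₁ - t) / Km4 / (Km3 / S + Km3 * (1 - x₁ - t) / Km4 + t))
      ((Km3 * (-1) / Km4 * (Km3 / S + Km3 * (1 - x₁ - x₂) / Km4 + x₂)
        - Km3 * (1 - x₁ - x₂) / Km4 * (Km3 * (-1) / Km4 + 1))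
        / (Km3 / S + Km3 * (1 - x₁ - x₂) / Km4 + x₂) ^ 2) x₂ :=
    hu.div hv hD2.ne'
  have hf2 := hq.const_mul (h₄ * c)
  have hf : HasDerivAt (fun t : ℝ =>
      -(k₂ * x₁) / (Km1 / S + Km1 * (1 - x₁ - t) / Km2 + x₁)
      + h₄ * c * (Km3 * (1 - x₁ - t) / Km4)
          / (Km3 / S + Km3 * (1 - x₁ - t) / Km4 + t))
      ((0 * (Km1 / S + Km1 * (1 - x₁ - x₂) / Km2 + x₁)
        - -(k₂ * x₁) * (Km1 * (-1) / Km2))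
        / (Km1 / S + Km1 * (1 - x₁ - x₂) / Km2 + x₁) ^ 2
      + h₄ * c * ((Km3 * (-1) / Km4 * (Km3 / S + Km3 * (1 - x₁ - x₂) / Km4 + x₂)
        - Km3 * (1 - x₁ - x₂) / Km4 * (Km3 * (-1) / Km4 + 1))
        / (Km3 / S + Km3 * (1 - x₁ - x₂) / Km4 + x₂) ^ 2)) x₂ := by
    have := hf1.add hf2
    simpa [mul_div_assoc, Pi.add_def] using this
  rw [hf.deriv]
  have hterm1 : (0 * (Km1 / S + Km1 * (1 - x₁ - x₂) / Km2 + x₁)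
        - -(k₂ * x₁) * (Km1 * (-1) / Km2))
        / (Km1 / S + Km1 * (1 - x₁ - x₂) / Km2 + x₁) ^ 2 ≤ 0 := by
    apply div_nonpos_of_nonpos_of_nonneg
    · have e : 0 * (Km1 / S + Km1 * (1 - x₁ - x₂) / Km2 + x₁)
          - -(k₂ * x₁) * (Km1 * (-1) / Km2) = -(k₂ * x₁ * Km1 / Km2) := by ring
      rw [e]
      exact neg_nonpos.mpr (by positivity)
    · positivity
  have hNum : Km3 * (-1) / Km4 * (Km3 / S + Km3 * (1 - x₁ - x₂) / Km4 + x₂)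
        - Km3 * (1 - x₁ - x₂) / Km4 * (Km3 * (-1) / Km4 + 1)
      = -(Km3 / Km4 * (Km3 / S + (1 - x₁))) := by ring
  have hterm2 : h₄ * c * ((Km3 * (-1) / Km4 * (Km3 / S + Km3 * (1 - x₁ - x₂) / Km4 + x₂)
        - Km3 * (1 - x₁ - x₂) / Km4 * (Km3 * (-1) / Km4 + 1))
        / (Km3 / S + Km3 * (1 - x₁ - x₂) / Km4 + x₂) ^ 2) < 0 := by
    apply mul_neg_of_pos_of_neg (by positivity)
    apply div_neg_of_neg_of_pos _ (by positivity)
    rw [hNum]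
    have hx1le : x₁ ≤ 1 := by linarith
    have : 0 < Km3 / Km4 * (Km3 / S + (1 - x₁)) := by
      apply mul_pos (by positivity)
      have : 0 < Km3 / S := by positivity
      linarith
    linarith
  linarith
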